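/- Let W = (ω_1,…,ω_n) be an integral basis of A with eW′ = MW, and let h = Σ_{i=1}^n (h_i/(de)) ω_i with h_i, d ∈ K[x], gcd(d, e) = 1, gcd(h_1,…,h_n, d) = 1, and d squarefree. If h = (Σ_{i=1}^n (q_i/u) ω_i)′ with u, q_1,…,q_n ∈ K[x] and gcd(q_1,…,q_n, u) = 1, then u is a constant in K. -/

import Mathlib

noncomputable section
open scoped Classical

open Polynomial

/-- Termwise derivative (w.r.t. `x`) of a generalized (Hahn/Puiseux) series in `x - a`:
the exponent-`q` coefficient of `P'` is `(q+1)` times the exponent-`(q+1)` coefficient of `P`. -/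
def hderiv {F : Type} [Field F] (P : HahnSeries ℚ F) : HahnSeries ℚ F where
  coeff q := ((q + 1 : ℚ) : F) * P.coeff (q + 1)
  isPWO_support' := by
    have hsub : (Function.support fun q : ℚ => ((q + 1 : ℚ) : F) * P.coeff (q + 1))
        ⊆ (fun q : ℚ => q - 1) '' P.support := by
      intro q hq
      refine ⟨q + 1, ?_, by ring⟩
      intro h0
      simp [Function.mem_support, h0] at hq
    exact (P.isPWO_support.image_of_monotoneOn
      (fun x _ y _ hxy => by simpa using hxy)).mono hsub

/-- The valuation of a generalized (Hahn/Puiseux) series: the least exponent occurring,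
and `⊤` for the zero series. -/
def hval {F : Type} [Field F] (P : HahnSeries ℚ F) : WithTop ℚ :=
  if h : P = 0 then ⊤
  else ((P.isWF_support.min (HahnSeries.support_nonempty_iff.mpr h) : ℚ) : WithTop ℚ)

/-- A series is ramified if some exponent in its support is not an integer. -/
def Ramified {F : Type} [Field F] (P : HahnSeries ℚ F) : Prop :=
  ∃ q ∈ P.support, ∀ z : ℤ, (z : ℚ) ≠ q

/-- The set of fractional (non-integer) exponents occurring in a series. -/
def fracSupport {F : Type} [Field F] (P : HahnSeries ℚ F) : Set ℚ :=
  {q | q ∈ P.support ∧ ∀ z : ℤ, (z : ℚ) ≠ q}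

/-- The minimal fractional exponent `δ(P)` of a series; `⊤` if `P` is not ramified. -/
def delta {F : Type} [Field F] (P : HahnSeries ℚ F) : WithTop ℚ :=
  if h : (fracSupport P).Nonempty then
    (((P.isWF_support.mono (fun q hq => hq.1)).min h : ℚ) : WithTop ℚ)
  else ⊤

/-- A Hahn series over `ℚ` is a Puiseux series if its exponents have a common denominator. -/
def IsPuiseux {F : Type} [Field F] (P : HahnSeries ℚ F) : Prop :=
  ∃ r : ℕ, 0 < r ∧ ∀ q ∈ P.support, ∃ z : ℤ, (z : ℚ) / r = q

/-! ### The algebraic function field `A = K(x)[y]/⟨m⟩` -/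

/-- The canonical image in `A = K(x)[y]/⟨m⟩` of a polynomial `p ∈ K[x]`. -/
def toA {K : Type} [Field K] (m : Polynomial (RatFunc K)) (p : Polynomial K) :
    AdjoinRoot m :=
  algebraMap (RatFunc K) (AdjoinRoot m) (algebraMap (Polynomial K) (RatFunc K) p)

/-- `D` is the derivation on `A = K(x)[y]/⟨m⟩` extending `d/dx` on `K(x)`:
it is additive, satisfies the Leibniz rule, and restricts to `d/dx` on `K[x]`
(hence, being a derivation on a field, on all of `K(x)`). -/
structure IsDerivationOnA {K : Type} [Field K] (m : Polynomial (RatFunc K))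
    (D : AdjoinRoot m → AdjoinRoot m) : Prop where
  map_add : ∀ f g, D (f + g) = D f + D g
  leibniz : ∀ f g, D (f * g) = f * D g + g * D f
  map_poly : ∀ p : Polynomial K, D (toA m p) = toA m (Polynomial.derivative p)

/-- `W` is a basis of `A` as a vector space over `K(x)`. -/
def IsKxBasis {K : Type} [Field K] {m : Polynomial (RatFunc K)}
    (W : Fin m.natDegree → AdjoinRoot m) : Prop :=
  LinearIndependent (RatFunc K) W ∧ Submodule.span (RatFunc K) (Set.range W) = ⊤

/-- `e W′ = M W` componentwise. -/
def DerivRel {K : Type} [Field K] {m : Polynomial (RatFunc K)}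
    (D : AdjoinRoot m → AdjoinRoot m) (W : Fin m.natDegree → AdjoinRoot m)
    (e : Polynomial K) (M : Matrix (Fin m.natDegree) (Fin m.natDegree) (Polynomial K)) : Prop :=
  ∀ i, toA m e * D (W i) = ∑ j, toA m (M i j) * W j

/-- `gcd(e, m₁₁, …, mₙₙ) = 1`: the only common divisors of `e` and the entries of `M`
are units. -/
def GcdOne {K : Type} [Field K] {n : ℕ}
    (e : Polynomial K) (M : Matrix (Fin n) (Fin n) (Polynomial K)) : Prop :=
  ∀ p : Polynomial K, p ∣ e → (∀ i j, p ∣ M i j) → IsUnit p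

/-! ### Puiseux expansions around a point `a` of the algebraic closure -/

/-- The family of the `n` distinct `K(x)`-embeddings of `A = K(x)[y]/⟨m⟩` into the field of
Puiseux series around a point `a`: each embedding is a ring homomorphism into the Hahn series
field whose values are Puiseux series, sending constants `c ∈ K` to constant series and the
rational function `x` to `a + (x - a)`, i.e. to the series `a + t` where `t` stands
for `x - a`. -/
structure EmbFamily (K F : Type) [Field K] [Field F] [Algebra K F]
    (m : Polynomial (RatFunc K)) (a : F) where
  emb : Fin m.natDegree → (AdjoinRoot m →+* HahnSeries ℚ F)
  emb_injective : Function.Injective emb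
  emb_C : ∀ i (c : K), emb i (toA m (Polynomial.C c)) = HahnSeries.single 0 (algebraMap K F c)
  emb_X : ∀ i, emb i (toA m Polynomial.X) =
    HahnSeries.single 0 a + HahnSeries.single 1 1
  emb_puiseux : ∀ i f, IsPuiseux (emb i f)

/-- The embeddings around `a` are differential homomorphisms: they intertwine the derivation
`D` on `A` with the termwise derivative of series. -/
def IsDiffFamily {K F : Type} [Field K] [Field F] [Algebra K F]
    {m : Polynomial (RatFunc K)} {a : F} (D : AdjoinRoot m → AdjoinRoot m)
    (σ : EmbFamily K F m a) : Prop :=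
  ∀ i f, σ.emb i (D f) = hderiv (σ.emb i f)

/-- `f ∈ A` is locally integral at `a`, i.e. `val_a(f) ≥ 0`: all Puiseux series associated
to `f` around `a` have nonnegative valuation. -/
def LocIntegralAt {K F : Type} [Field K] [Field F] [Algebra K F]
    {m : Polynomial (RatFunc K)} {a : F} (σ : EmbFamily K F m a)
    (f : AdjoinRoot m) : Prop :=
  ∀ i, 0 ≤ hval (σ.emb i f)

/-- `a` is a branch point of `f ∈ A`: one of the Puiseux series associated to `f` around `a`
is ramified. -/
def IsBranchPointOf {K F : Type} [Field K] [Field F] [Algebra K F]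
    {m : Polynomial (RatFunc K)} {a : F} (σ : EmbFamily K F m a)
    (f : AdjoinRoot m) : Prop :=
  ∃ i, Ramified (σ.emb i f)

/-- `f ∈ A` is (globally) integral: locally integral at every point `a` of the algebraic
closure of `K` (given the system `σ` of Puiseux expansions around each point). -/
def IntegralElem {K : Type} [Field K] {m : Polynomial (RatFunc K)}
    (σ : ∀ a : AlgebraicClosure K, EmbFamily K (AlgebraicClosure K) m a)
    (f : AdjoinRoot m) : Prop :=
  ∀ a, LocIntegralAt (σ a) f

/-- `W` is an integral basis of `A`: a `K(x)`-vector-space basis consisting of integral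
elements such that every integral element is a `K[x]`-linear combination of `W`. -/
def IsIntegralBasis {K : Type} [Field K] {m : Polynomial (RatFunc K)}
    (σ : ∀ a : AlgebraicClosure K, EmbFamily K (AlgebraicClosure K) m a)
    (W : Fin m.natDegree → AdjoinRoot m) : Prop :=
  IsKxBasis W ∧ (∀ i, IntegralElem σ (W i)) ∧
    ∀ f, IntegralElem σ f → ∃ c : Fin m.natDegree → Polynomial K,
      f = ∑ i, toA m (c i) * W i

/-- The rational function `r ∈ K(x)` has no pole at `a`: `r = p/q` with `q(a) ≠ 0`. -/
def NoPoleAt {K F : Type} [Field K] [Field F] [Algebra K F] (a : F) (r : RatFunc K) : Prop :=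
  ∃ p q : Polynomial K, Polynomial.aeval a q ≠ 0 ∧
    r * algebraMap (Polynomial K) (RatFunc K) q = algebraMap (Polynomial K) (RatFunc K) p

/-- `W` is a local integral basis of `A` at `a`: a `K(x)`-vector-space basis consisting of
elements that are locally integral at `a`, such that every element of `A` that is locally
integral at `a` is a linear combination of `W` with coefficients in `K(x)_a` (rational
functions without a pole at `a`). -/
def IsLocalIntegralBasisAt {K F : Type} [Field K] [Field F] [Algebra K F]
    {m : Polynomial (RatFunc K)} {a : F} (σ : EmbFamily K F m a)
    (W : Fin m.natDegree → AdjoinRoot m) : Prop :=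
  IsKxBasis W ∧ (∀ i, LocIntegralAt σ (W i)) ∧
    ∀ f, LocIntegralAt σ f → ∃ c : Fin m.natDegree → RatFunc K,
      (∀ i, NoPoleAt a (c i)) ∧ f = ∑ i, algebraMap (RatFunc K) (AdjoinRoot m) (c i) * W i

section HValLemmas

variable {F : Type} [Field F]

theorem hval_zero' : hval (0 : HahnSeries ℚ F) = ⊤ := dif_pos rfl

theorem hval_of_ne {P : HahnSeries ℚ F} (h : P ≠ 0) :
    hval P = ((P.isWF_support.min (HahnSeries.support_nonempty_iff.mpr h) : ℚ) : WithTop ℚ) :=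
  dif_neg h

theorem hval_eq_order {P : HahnSeries ℚ F} (h : P ≠ 0) : hval P = (P.order : WithTop ℚ) := by
  rw [hval_of_ne h, HahnSeries.order_of_ne h]

theorem hval_le_of_mem {P : HahnSeries ℚ F} {q : ℚ} (hq : q ∈ P.support) :
    hval P ≤ (q : WithTop ℚ) := by
  have hP : P ≠ 0 := by
    rintro rfl
    simp [HahnSeries.support_zero] at hq
  rw [hval_of_ne hP]
  exact_mod_cast P.isWF_support.min_le _ hq

theorem le_hval_iff {P : HahnSeries ℚ F} {c : ℚ} :
    (c : WithTop ℚ) ≤ hval P ↔ ∀ q ∈ P.support, c ≤ q := by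
  constructor
  · intro hle q hq
    exact_mod_cast hle.trans (hval_le_of_mem hq)
  · intro hall
    by_cases hP : P = 0
    · simp [hP, hval_zero']
    · rw [hval_of_ne hP]
      exact_mod_cast hall _ (P.isWF_support.min_mem _)

theorem hval_eq_of_mem {P : HahnSeries ℚ F} {c : ℚ} (hc : c ∈ P.support)
    (hall : ∀ q ∈ P.support, c ≤ q) : hval P = (c : WithTop ℚ) :=
  le_antisymm (hval_le_of_mem hc) (le_hval_iff.mpr hall)

theorem mem_of_hval_eq {P : HahnSeries ℚ F} {c : ℚ} (h : hval P = (c : WithTop ℚ)) :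
    c ∈ P.support := by
  have hP : P ≠ 0 := by rintro rfl; rw [hval_zero'] at h; exact (WithTop.top_ne_coe h).elim
  rw [hval_of_ne hP] at h
  have := P.isWF_support.min_mem (HahnSeries.support_nonempty_iff.mpr hP)
  rwa [show P.isWF_support.min (HahnSeries.support_nonempty_iff.mpr hP) = c from
    WithTop.coe_injective h] at this

theorem hval_ne_top {P : HahnSeries ℚ F} (h : P ≠ 0) : hval P ≠ ⊤ := by
  rw [hval_of_ne h]; exact WithTop.coe_ne_top

theorem hval_mul {P Q : HahnSeries ℚ F} : hval (P * Q) = hval P + hval Q := by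
  by_cases hP : P = 0
  · simp [hP, hval_zero']
  by_cases hQ : Q = 0
  · simp [hQ, hval_zero']
  have hPQ : P * Q ≠ 0 := mul_ne_zero hP hQ
  rw [hval_eq_order hP, hval_eq_order hQ, hval_eq_order hPQ,
    HahnSeries.order_mul hP hQ]
  exact_mod_cast rfl

theorem hval_pow {P : HahnSeries ℚ F} (hP : P ≠ 0) (n : ℕ) {w : ℚ} (h : hval P = (w : WithTop ℚ)) :
    hval (P ^ n) = ((n * w : ℚ) : WithTop ℚ) := by
  induction n with
  | zero =>
      simp only [pow_zero, Nat.cast_zero, zero_mul]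
      have : (1 : HahnSeries ℚ F) ≠ 0 := one_ne_zero
      rw [hval_eq_order this, HahnSeries.order_one]
  | succ n ih =>
      rw [pow_succ, hval_mul, ih, h, ← WithTop.coe_add]
      congr 1
      push_cast
      ring

theorem hval_single {q : ℚ} {c : F} (hc : c ≠ 0) :
    hval (HahnSeries.single q c : HahnSeries ℚ F) = (q : WithTop ℚ) := by
  apply hval_eq_of_mem
  · rw [HahnSeries.support_single_of_ne hc]; exact rfl
  · intro r hr
    rw [HahnSeries.support_single_of_ne hc] at hr
    exact le_of_eq hr.symm

theorem coeff_finsetSum {ι : Type*} (s : Finset ι) (f : ι → HahnSeries ℚ F) (q : ℚ) :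
    (∑ i ∈ s, f i).coeff q = ∑ i ∈ s, (f i).coeff q := by
  classical
  induction s using Finset.induction with
  | empty => simp
  | insert _ _ h ih => simp [Finset.sum_insert h, HahnSeries.coeff_add, ih]

theorem support_finsetSum_subset {ι : Type*} (s : Finset ι) (f : ι → HahnSeries ℚ F) :
    (∑ i ∈ s, f i).support ⊆ ⋃ i ∈ s, (f i).support := by
  intro q hq
  rw [HahnSeries.mem_support, coeff_finsetSum] at hq
  obtain ⟨i, hi, hne⟩ : ∃ i ∈ s, (f i).coeff q ≠ 0 := by
    by_contra hcon
    push_neg at hcon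
    exact hq (Finset.sum_eq_zero hcon)
  exact Set.mem_biUnion hi hne

theorem le_hval_finsetSum {ι : Type*} {s : Finset ι} {f : ι → HahnSeries ℚ F} {c : ℚ}
    (h : ∀ i ∈ s, (c : WithTop ℚ) ≤ hval (f i)) :
    (c : WithTop ℚ) ≤ hval (∑ i ∈ s, f i) := by
  rw [le_hval_iff]
  intro q hq
  obtain ⟨i, hi, hqi⟩ := by
    simpa using support_finsetSum_subset s f hq
  exact (le_hval_iff.mp (h i hi)) q hqi

theorem le_hval_mul_of_le {P Q : HahnSeries ℚ F} {c d : ℚ}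
    (hP : (c : WithTop ℚ) ≤ hval P) (hQ : (d : WithTop ℚ) ≤ hval Q) :
    ((c + d : ℚ) : WithTop ℚ) ≤ hval (P * Q) := by
  rw [le_hval_iff]
  intro q hq
  obtain ⟨q1, hq1, q2, hq2, rfl⟩ := HahnSeries.support_mul_subset hq
  exact add_le_add (le_hval_iff.mp hP _ hq1) (le_hval_iff.mp hQ _ hq2)

end HValLemmas
section HDerivLemmas

variable {F : Type} [Field F]

theorem hderiv_coeff (P : HahnSeries ℚ F) (q : ℚ) :
    (hderiv P).coeff q = ((q + 1 : ℚ) : F) * P.coeff (q + 1) := rfl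

theorem mem_support_hderiv {P : HahnSeries ℚ F} {q : ℚ} (h : q ∈ (hderiv P).support) :
    q + 1 ∈ P.support ∧ q + 1 ≠ 0 := by
  rw [HahnSeries.mem_support, hderiv_coeff] at h
  refine ⟨?_, ?_⟩
  · rw [HahnSeries.mem_support]
    intro h0
    rw [h0, mul_zero] at h
    exact h rfl
  · intro h0
    rw [h0] at h
    simp at h

theorem hval_hderiv_eq [CharZero F] {P : HahnSeries ℚ F} {w : ℚ}
    (h : hval P = (w : WithTop ℚ)) (hw : w ≠ 0) :
    hval (hderiv P) = ((w - 1 : ℚ) : WithTop ℚ) := by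
  have hmem : w ∈ P.support := mem_of_hval_eq h
  apply hval_eq_of_mem
  · rw [HahnSeries.mem_support, hderiv_coeff]
    have hww : w - 1 + 1 = w := by ring
    rw [hww]
    exact mul_ne_zero (by exact_mod_cast hw) hmem
  · intro q hq
    obtain ⟨h1, _⟩ := mem_support_hderiv hq
    have h2 : w ≤ q + 1 := le_hval_iff.mp (le_of_eq h.symm) _ h1
    linarith

theorem le_hval_hderiv_of_puiseux {P : HahnSeries ℚ F} {r : ℕ} (hr : 0 < r)
    (hsupp : ∀ q ∈ P.support, ∃ z : ℤ, (z : ℚ) / r = q) (hpos : ∀ q ∈ P.support, 0 ≤ q) :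
    ((1 / r - 1 : ℚ) : WithTop ℚ) ≤ hval (hderiv P) := by
  rw [le_hval_iff]
  intro q hq
  obtain ⟨h1, h2⟩ := mem_support_hderiv hq
  obtain ⟨z, hz⟩ := hsupp _ h1
  have h0 : 0 ≤ q + 1 := hpos _ h1
  have hrQ : (0 : ℚ) < (r : ℚ) := by exact_mod_cast hr
  have hzpos : (0 : ℚ) < (z : ℚ) := by
    by_contra hcon
    push_neg at hcon
    have : (z : ℚ) / r ≤ 0 := div_nonpos_of_nonpos_of_nonneg hcon (le_of_lt hrQ)
    rw [hz] at this
    have : q + 1 = 0 := le_antisymm this h0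
    exact h2 this
  have hz1 : (1 : ℚ) ≤ (z : ℚ) := by exact_mod_cast hzpos
  have hfin : 1 / (r : ℚ) ≤ (z : ℚ) / r := by gcongr
  rw [hz] at hfin
  linarith

end HDerivLemmas
section PhiH

variable {F : Type} [Field F]

theorem coeff_zero_mul {P Q : HahnSeries ℚ F}
    (hP : ∀ q ∈ P.support, 0 ≤ q) (hQ : ∀ q ∈ Q.support, 0 ≤ q) :
    (P * Q).coeff 0 = P.coeff 0 * Q.coeff 0 := by
  classical
  rw [HahnSeries.coeff_mul]
  have hmem : ∀ b ∈ Finset.antidiagonal P.isPWO_support Q.isPWO_support 0,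
      b = ((0, 0) : ℚ × ℚ) := by
    intro b hb
    rw [Finset.mem_antidiagonal] at hb
    have hb1 : 0 ≤ b.1 := hP _ hb.1
    have hb2 : 0 ≤ b.2 := hQ _ hb.2.1
    have hb12 : b.1 + b.2 = 0 := hb.2.2
    have e1 : b.1 = 0 := by linarith
    have e2 : b.2 = 0 := by linarith
    rw [Prod.ext_iff]
    exact ⟨e1, e2⟩
  by_cases h0 : ((0, 0) : ℚ × ℚ) ∈
      Finset.antidiagonal P.isPWO_support Q.isPWO_support 0
  · rw [Finset.sum_eq_single_of_mem (0, 0) h0]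
    intro b hb hne
    exact absurd (hmem b hb) hne
  · rw [Finset.sum_eq_zero (fun b hb => absurd hb (by rw [hmem b hb]; exact h0))]
    rw [Finset.mem_antidiagonal] at h0
    push_neg at h0
    by_cases hp0 : (0 : ℚ) ∈ P.support
    · by_cases hq0 : (0 : ℚ) ∈ Q.support
      · exact absurd (zero_add 0) (h0 hp0 hq0)
      · rw [HahnSeries.mem_support, not_not] at hq0
        rw [hq0, mul_zero]
    · rw [HahnSeries.mem_support, not_not] at hp0
      rw [hp0, zero_mul]

/-- The subring of Hahn series supported on nonnegative exponents. -/
def nonnegSeries (F : Type) [Field F] : Subring (HahnSeries ℚ F) where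
  carrier := {P | ∀ q ∈ P.support, 0 ≤ q}
  zero_mem' := by intro q hq; simp [HahnSeries.support_zero] at hq
  one_mem' := by
    intro q hq
    have := HahnSeries.support_single_subset (a := (0 : ℚ)) (r := (1 : F)) hq
    simp only [Set.mem_singleton_iff] at this
    exact le_of_eq this.symm
  add_mem' := by
    intro P Q hP hQ q hq
    have := HahnSeries.support_add_subset _ _ hq
    rcases this with h | h
    · exact hP _ h
    · exact hQ _ h
  neg_mem' := by
    intro P hP q hq
    rw [HahnSeries.support_neg] at hq
    exact hP _ hq
  mul_mem' := by
    intro P Q hP hQ q hq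
    obtain ⟨q1, hq1, q2, hq2, rfl⟩ := HahnSeries.support_mul_subset hq
    exact add_nonneg (hP _ hq1) (hQ _ hq2)

/-- Coefficient at exponent 0, as a ring hom on nonnegatively supported series. -/
def coeffZeroHom (F : Type) [Field F] : nonnegSeries F →+* F where
  toFun P := (P : HahnSeries ℚ F).coeff 0
  map_one' := by
    change (1 : HahnSeries ℚ F).coeff 0 = 1
    simp [HahnSeries.coeff_one]
  map_mul' P Q := coeff_zero_mul P.2 Q.2
  map_zero' := by change (0 : HahnSeries ℚ F).coeff 0 = 0; simp
  map_add' P Q := by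
    change ((P : HahnSeries ℚ F) + Q).coeff 0 = _
    simp [HahnSeries.coeff_add]

/-- Evaluation of a polynomial over `F` at the series `a + t`. -/
def phiH (a : F) : Polynomial F →+* HahnSeries ℚ F :=
  Polynomial.eval₂RingHom (HahnSeries.C : F →+* HahnSeries ℚ F)
    (HahnSeries.single 0 a + HahnSeries.single 1 1)

theorem xElt_mem (a : F) :
    (HahnSeries.single (0 : ℚ) a + HahnSeries.single 1 1 : HahnSeries ℚ F) ∈ nonnegSeries F := by
  intro q hq
  have := HahnSeries.support_add_subset _ _ hq
  rcases this with h | h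
  · have := HahnSeries.support_single_subset h
    simp only [Set.mem_singleton_iff] at this
    exact le_of_eq this.symm
  · have := HahnSeries.support_single_subset h
    simp only [Set.mem_singleton_iff] at this
    rw [this]
    norm_num

theorem cElt_mem (c : F) : (HahnSeries.C c : HahnSeries ℚ F) ∈ nonnegSeries F := by
  intro q hq
  have := HahnSeries.support_single_subset (a := (0:ℚ)) (r := c) hq
  simp only [Set.mem_singleton_iff] at this
  exact le_of_eq this.symm

/-- `phiH` with codomain restricted to nonnegatively supported series. -/
def phiH' (a : F) : Polynomial F →+* nonnegSeries F :=
  Polynomial.eval₂RingHom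
    ((HahnSeries.C : F →+* HahnSeries ℚ F).codRestrict (nonnegSeries F) cElt_mem)
    ⟨HahnSeries.single 0 a + HahnSeries.single 1 1, xElt_mem a⟩

theorem phiH_eq (a : F) (f : Polynomial F) : phiH a f = (phiH' a f : HahnSeries ℚ F) := by
  have : phiH a = (nonnegSeries F).subtype.comp (phiH' a) := by
    apply Polynomial.ringHom_ext
    · intro c
      simp [phiH, phiH', Polynomial.eval₂_C]
    · simp [phiH, phiH', Polynomial.eval₂_X]
  rw [this]
  rfl

theorem phiH_support_nonneg (a : F) (f : Polynomial F) : ∀ q ∈ (phiH a f).support, 0 ≤ q := by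
  rw [phiH_eq]
  exact (phiH' a f).2

theorem coeff_zero_phiH (a : F) (f : Polynomial F) : (phiH a f).coeff 0 = f.eval a := by
  have : (coeffZeroHom F).comp (phiH' a) = Polynomial.evalRingHom a := by
    apply Polynomial.ringHom_ext
    · intro c
      have h1 : phiH' a (Polynomial.C c) =
          ((HahnSeries.C : F →+* HahnSeries ℚ F).codRestrict (nonnegSeries F) cElt_mem) c := by
        simp [phiH', Polynomial.eval₂_C]
      rw [RingHom.comp_apply, h1]
      show (HahnSeries.C c : HahnSeries ℚ F).coeff 0 = _
      simp [HahnSeries.C_apply]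
    · have h1 : phiH' a Polynomial.X =
          ⟨HahnSeries.single 0 a + HahnSeries.single 1 1, xElt_mem a⟩ := by
        simp [phiH', Polynomial.eval₂_X]
      rw [RingHom.comp_apply, h1]
      show (HahnSeries.single (0:ℚ) a + HahnSeries.single 1 1 : HahnSeries ℚ F).coeff 0 = _
      rw [HahnSeries.coeff_add, HahnSeries.coeff_single_same,
        HahnSeries.coeff_single_of_ne (by norm_num)]
      simp
  have h2 := congrArg (fun g => g f) this
  simp only [RingHom.comp_apply, Polynomial.coe_evalRingHom] at h2
  rw [phiH_eq]
  exact h2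

theorem hval_phiH_nonneg (a : F) (f : Polynomial F) : (0 : WithTop ℚ) ≤ hval (phiH a f) := by
  have : ((0:ℚ) : WithTop ℚ) ≤ hval (phiH a f) := le_hval_iff.mpr (phiH_support_nonneg a f)
  exact_mod_cast this

theorem hval_phiH_eq_zero {a : F} {f : Polynomial F} (h : f.eval a ≠ 0) :
    hval (phiH a f) = ((0:ℚ) : WithTop ℚ) := by
  apply hval_eq_of_mem
  · rw [HahnSeries.mem_support, coeff_zero_phiH]
    exact h
  · exact phiH_support_nonneg a f

theorem phiH_X_sub_C (a : F) :
    phiH a (Polynomial.X - Polynomial.C a) = HahnSeries.single 1 1 := by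
  rw [map_sub]
  have h1 : phiH a Polynomial.X = HahnSeries.single 0 a + HahnSeries.single 1 1 := by
    simp [phiH, Polynomial.eval₂_X]
  have h2 : phiH a (Polynomial.C a) = HahnSeries.single 0 a := by
    simp [phiH, Polynomial.eval₂_C]
  rw [h1, h2]
  abel

end PhiH
section EmbToA

variable {K F : Type} [Field K] [Field F] [Algebra K F]
variable {m : Polynomial (RatFunc K)} {a : F}

/-- `toA` as a ring homomorphism. -/
def toARingHom (K : Type) [Field K] (m : Polynomial (RatFunc K)) :
    Polynomial K →+* AdjoinRoot m :=
  (algebraMap (RatFunc K) (AdjoinRoot m)).comp (algebraMap (Polynomial K) (RatFunc K))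

theorem toA_eq_ringHom (f : Polynomial K) : toA m f = toARingHom K m f := rfl

theorem toA_mul (f g : Polynomial K) : toA m (f * g) = toA m f * toA m g := by
  rw [toA_eq_ringHom, toA_eq_ringHom, toA_eq_ringHom, map_mul]

theorem toA_pow (f : Polynomial K) (n : ℕ) : toA m (f ^ n) = toA m f ^ n := by
  rw [toA_eq_ringHom, toA_eq_ringHom, map_pow]

theorem toA_sub (f g : Polynomial K) : toA m (f - g) = toA m f - toA m g := by
  rw [toA_eq_ringHom, toA_eq_ringHom, toA_eq_ringHom, map_sub]

theorem emb_toA (σa : EmbFamily K F m a) (i : Fin m.natDegree) (f : Polynomial K) :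
    σa.emb i (toA m f) = phiH a (f.map (algebraMap K F)) := by
  have hcomp : (σa.emb i).comp (toARingHom K m) =
      (phiH a).comp (Polynomial.mapRingHom (algebraMap K F)) := by
    apply Polynomial.ringHom_ext
    · intro c
      rw [RingHom.comp_apply, RingHom.comp_apply]
      rw [show toARingHom K m (Polynomial.C c) = toA m (Polynomial.C c) from rfl]
      rw [σa.emb_C i c]
      rw [Polynomial.coe_mapRingHom, Polynomial.map_C]
      simp [phiH, Polynomial.eval₂_C]
    · rw [RingHom.comp_apply, RingHom.comp_apply]
      rw [show toARingHom K m Polynomial.X = toA m Polynomial.X from rfl]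
      rw [σa.emb_X i]
      rw [Polynomial.coe_mapRingHom, Polynomial.map_X]
      simp [phiH, Polynomial.eval₂_X]
  have := congrArg (fun g => g f) hcomp
  exact this

theorem hval_emb_toA_nonneg (σa : EmbFamily K F m a) (i : Fin m.natDegree) (f : Polynomial K) :
    ((0:ℚ) : WithTop ℚ) ≤ hval (σa.emb i (toA m f)) := by
  rw [emb_toA]
  exact_mod_cast hval_phiH_nonneg a (f.map (algebraMap K F))

theorem hval_emb_toA_of_aeval_ne (σa : EmbFamily K F m a) (i : Fin m.natDegree)
    {f : Polynomial K} (hf : Polynomial.aeval a f ≠ 0) :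
    hval (σa.emb i (toA m f)) = ((0:ℚ) : WithTop ℚ) := by
  rw [emb_toA]
  apply hval_phiH_eq_zero
  rwa [Polynomial.eval_map, ← Polynomial.aeval_def]

theorem hval_emb_toA_irred [CharZero K] (σa : EmbFamily K F m a) (i : Fin m.natDegree)
    {p : Polynomial K} (hp : Irreducible p) (ha : Polynomial.aeval a p = 0) :
    hval (σa.emb i (toA m p)) = ((1:ℚ) : WithTop ℚ) := by
  rw [emb_toA]
  set P := p.map (algebraMap K F) with hP
  have hProot : P.IsRoot a := by
    rw [Polynomial.IsRoot, Polynomial.eval_map, ← Polynomial.aeval_def, ha]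
  obtain ⟨g, hg⟩ := (Polynomial.dvd_iff_isRoot.mpr hProot)
  have hsqf : Squarefree P := (hp.separable.map).squarefree
  have hgroot : g.eval a ≠ 0 := by
    intro h0
    obtain ⟨g2, hg2⟩ := Polynomial.dvd_iff_isRoot.mpr h0
    have : (Polynomial.X - Polynomial.C a) * (Polynomial.X - Polynomial.C a) ∣ P := by
      rw [hg, hg2]; ring_nf; exact Dvd.intro g2 (by ring)
    exact Polynomial.not_isUnit_X_sub_C a (hsqf _ this)
  rw [hg, map_mul, hval_mul, phiH_X_sub_C, hval_single (one_ne_zero), hval_phiH_eq_zero hgroot,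
    ← WithTop.coe_add, add_zero]

end EmbToA
section MinPolyFacts

variable {K F : Type} [Field K] [Field F] [Algebra K F]

theorem irred_dvd_of_root {p f : Polynomial K} {a : F} (hint : IsIntegral K a)
    (hp : Irreducible p) (hpa : Polynomial.aeval a p = 0) (hfa : Polynomial.aeval a f = 0) :
    p ∣ f := by
  have h1 : minpoly K a ∣ p := minpoly.dvd K a hpa
  have h2 : minpoly K a ∣ f := minpoly.dvd K a hfa
  obtain ⟨c, hc⟩ := h1
  rcases hp.isUnit_or_isUnit hc with hu | hu
  · exact absurd hu ((minpoly.irreducible hint).not_isUnit)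
  · have hassoc : Associated (minpoly K a) p := ⟨hu.unit, by rw [IsUnit.unit_spec, hc]⟩
    exact hassoc.symm.dvd.trans h2

theorem aeval_ne_of_not_dvd {p f : Polynomial K} {a : F} (hint : IsIntegral K a)
    (hp : Irreducible p) (hpa : Polynomial.aeval a p = 0) (hnd : ¬ p ∣ f) :
    Polynomial.aeval a f ≠ 0 :=
  fun h0 => hnd (irred_dvd_of_root hint hp hpa h0)

variable {m : Polynomial (RatFunc K)} {a : F}

theorem ne_zero_of_hval_coe {P : HahnSeries ℚ F} {c : ℚ} (h : hval P = (c : WithTop ℚ)) :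
    P ≠ 0 := by
  rintro rfl
  rw [hval_zero'] at h
  exact WithTop.top_ne_coe h

theorem hval_emb_toA_pow_mul [CharZero K] (σa : EmbFamily K F m a) (i : Fin m.natDegree)
    {p w : Polynomial K} (hp : Irreducible p) (ha : Polynomial.aeval a p = 0)
    (hw : Polynomial.aeval a w ≠ 0) (s : ℕ) :
    hval (σa.emb i (toA m (p ^ s * w))) = ((s : ℚ) : WithTop ℚ) := by
  have h1 : hval (σa.emb i (toA m p)) = ((1:ℚ) : WithTop ℚ) := hval_emb_toA_irred σa i hp ha
  have hne : σa.emb i (toA m p) ≠ 0 := ne_zero_of_hval_coe h1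
  rw [toA_mul, toA_pow, map_mul, map_pow, hval_mul, hval_pow hne s h1,
    hval_emb_toA_of_aeval_ne σa i hw, ← WithTop.coe_add]
  norm_num

end MinPolyFacts

section AlgSide

variable {K : Type} [Field K] {m : Polynomial (RatFunc K)}

theorem coeff_ext_poly [Fact (Irreducible m)]
    {W : Fin m.natDegree → AdjoinRoot m} (hW : LinearIndependent (RatFunc K) W)
    {α β : Fin m.natDegree → Polynomial K}
    (h : ∑ i, toA m (α i) * W i = ∑ i, toA m (β i) * W i) : ∀ i, α i = β i := by
  intro i
  set γ : Fin m.natDegree → RatFunc K := fun i =>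
    algebraMap (Polynomial K) (RatFunc K) (α i) - algebraMap (Polynomial K) (RatFunc K) (β i)
    with hγ
  have h0 : ∑ i, γ i • W i = 0 := by
    have : ∀ i, γ i • W i = toA m (α i) * W i - toA m (β i) * W i := by
      intro i
      rw [hγ]
      simp only [Algebra.smul_def, map_sub, sub_mul]
      rfl
    rw [Finset.sum_congr rfl (fun i _ => this i), Finset.sum_sub_distrib, h, sub_self]
  have := Fintype.linearIndependent_iff.mp hW γ h0 i
  rw [hγ] at this
  have heq : algebraMap (Polynomial K) (RatFunc K) (α i) =
      algebraMap (Polynomial K) (RatFunc K) (β i) := by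
    have := sub_eq_zero.mp this
    exact this
  exact IsFractionRing.injective (Polynomial K) (RatFunc K) heq

theorem D_zero {D : AdjoinRoot m → AdjoinRoot m} (hD : IsDerivationOnA m D) : D 0 = 0 := by
  have h := hD.map_add 0 0
  simp only [add_zero] at h
  exact left_eq_add.mp h

end AlgSide
section AlgSide2

variable {K : Type} [Field K] {m : Polynomial (RatFunc K)}

theorem D_finsetSum {D : AdjoinRoot m → AdjoinRoot m} (hD : IsDerivationOnA m D)
    {ι : Type} (s : Finset ι) (f : ι → AdjoinRoot m) :
    D (∑ i ∈ s, f i) = ∑ i ∈ s, D (f i) := by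
  classical
  induction s using Finset.induction with
  | empty => simpa using D_zero hD
  | insert _ _ hmem ih => rw [Finset.sum_insert hmem, hD.map_add, ih, Finset.sum_insert hmem]

theorem toA_injective [Fact (Irreducible m)] {f g : Polynomial K} (h : toA m f = toA m g) :
    f = g := by
  apply IsFractionRing.injective (Polynomial K) (RatFunc K)
  exact (algebraMap (RatFunc K) (AdjoinRoot m)).injective h

theorem toA_ne_zero [Fact (Irreducible m)] {f : Polynomial K} (h : f ≠ 0) : toA m f ≠ 0 := by
  intro h0
  exact h (toA_injective (by rw [h0]; exact (map_zero (toARingHom K m)).symm))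

theorem key_identity [CharZero K] [Fact (Irreducible m)]
    (D : AdjoinRoot m → AdjoinRoot m) (hD : IsDerivationOnA m D)
    (W : Fin m.natDegree → AdjoinRoot m)
    (e : Polynomial K) (M : Matrix (Fin m.natDegree) (Fin m.natDegree) (Polynomial K))
    (hWli : LinearIndependent (RatFunc K) W) (hrel : DerivRel D W e M)
    (h : AdjoinRoot m) (hc : Fin m.natDegree → Polynomial K) (d u : Polynomial K)
    (q : Fin m.natDegree → Polynomial K) (hu0 : u ≠ 0)
    (hrep : toA m d * toA m e * h = ∑ i, toA m (hc i) * W i)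
    (hint : h = D (∑ i, toA m (q i) / toA m u * W i)) :
    ∀ j, u ^ 2 * hc j =
      d * u * (e * Polynomial.derivative (q j) + ∑ i, q i * M i j)
        - d * Polynomial.derivative u * e * q j := by
  have htoAu : toA m u ≠ 0 := toA_ne_zero hu0
  set g : AdjoinRoot m := ∑ i, toA m (q i) / toA m u * W i with hg
  set G : AdjoinRoot m := ∑ i, toA m (q i) * W i with hG
  have hug : toA m u * g = G := by
    rw [hg, hG, Finset.mul_sum]
    apply Finset.sum_congr rfl
    intro i _
    have : toA m u * (toA m (q i) / toA m u) = toA m (q i) := by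
      field_simp
    rw [← mul_assoc, this]
  have hDG : D G = ∑ i, (toA m (q i) * D (W i) + W i * toA m (Polynomial.derivative (q i))) := by
    rw [hG, D_finsetSum hD]
    apply Finset.sum_congr rfl
    intro i _
    rw [hD.leibniz, hD.map_poly]
  have heDG : toA m e * D G =
      ∑ j, toA m (e * Polynomial.derivative (q j) + ∑ i, q i * M i j) * W j := by
    rw [hDG, Finset.mul_sum]
    have step : ∀ i, toA m e * (toA m (q i) * D (W i) + W i * toA m (Polynomial.derivative (q i)))
        = (∑ j, toA m (q i * M i j) * W j) + toA m (e * Polynomial.derivative (q i)) * W i := by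
      intro i
      rw [mul_add]
      congr 1
      · rw [show toA m e * (toA m (q i) * D (W i)) = toA m (q i) * (toA m e * D (W i)) by ring,
          hrel i, Finset.mul_sum]
        apply Finset.sum_congr rfl
        intro j _
        rw [toA_mul]
        ring
      · rw [toA_mul]
        ring
    rw [Finset.sum_congr rfl (fun i _ => step i), Finset.sum_add_distrib, Finset.sum_comm]
    rw [← Finset.sum_add_distrib]
    apply Finset.sum_congr rfl
    intro j _
    rw [show (e * Polynomial.derivative (q j) + ∑ i, q i * M i j)
        = (∑ i, q i * M i j) + e * Polynomial.derivative (q j) by ring]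
    rw [show toA m ((∑ i, q i * M i j) + e * Polynomial.derivative (q j))
        = toA m (∑ i, q i * M i j) + toA m (e * Polynomial.derivative (q j)) from
      map_add (toARingHom K m) _ _]
    rw [add_mul]
    congr 1
    rw [show toA m (∑ i, q i * M i j) = ∑ i, toA m (q i * M i j) from
      map_sum (toARingHom K m) _ _]
    rw [Finset.sum_mul]
  have hDg : toA m u * h + toA m (Polynomial.derivative u) * g = D G := by
    have hlei := hD.leibniz (toA m u) g
    rw [hug] at hlei
    rw [hint, hlei, hD.map_poly]
    ring
  have main : ∑ j, toA m (u ^ 2 * hc j) * W j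
      = ∑ j, toA m (d * u * (e * Polynomial.derivative (q j) + ∑ i, q i * M i j)
          - d * Polynomial.derivative u * e * q j) * W j := by
    have l1 : ∑ j, toA m (u ^ 2 * hc j) * W j = toA m (u ^ 2) * (toA m d * toA m e * h) := by
      rw [hrep, Finset.mul_sum]
      apply Finset.sum_congr rfl
      intro j _
      rw [toA_mul]
      ring
    have l2 : toA m (u ^ 2) * (toA m d * toA m e * h)
        = toA m d * toA m u * (toA m e * D G)
          - toA m d * toA m (Polynomial.derivative u) * (toA m e * G) := by
      have huh : toA m u * h = D G - toA m (Polynomial.derivative u) * g := by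
        rw [← hDg]; ring
      rw [toA_pow]
      calc toA m u ^ 2 * (toA m d * toA m e * h)
          = toA m d * toA m u * (toA m e * (toA m u * h)) := by ring
        _ = toA m d * toA m u * (toA m e * (D G - toA m (Polynomial.derivative u) * g)) := by
            rw [huh]
        _ = toA m d * toA m u * (toA m e * D G)
            - toA m d * toA m (Polynomial.derivative u) * (toA m e * (toA m u * g)) := by ring
        _ = _ := by rw [hug]
    rw [l1, l2, heDG, hG, Finset.mul_sum, Finset.mul_sum, Finset.mul_sum, ← Finset.sum_sub_distrib]
    apply Finset.sum_congr rfl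
    intro j _
    simp only [toA_sub, toA_mul]
    ring
  intro j
  exact coeff_ext_poly hWli main j

end AlgSide2
section Divisibility

variable {K : Type} [Field K] [CharZero K]

theorem not_dvd_aux {p v : Polynomial K} (hp : Irreducible p) (hpv : ¬ p ∣ v)
    {k : ℕ} (hk : 1 ≤ k) :
    ¬ p ∣ (Polynomial.C (k : K) * Polynomial.derivative p * v
      + p * Polynomial.derivative v) := by
  intro hdvd
  have h1 : p ∣ Polynomial.C (k : K) * Polynomial.derivative p * v := by
    have h2 : p ∣ p * Polynomial.derivative v := Dvd.intro _ rfl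
    simpa using dvd_sub hdvd h2
  have hprime := hp.prime
  rcases hprime.dvd_mul.mp h1 with h2 | h2
  · rcases hprime.dvd_mul.mp h2 with h3 | h3
    · have hkne : ((k : K)) ≠ 0 := Nat.cast_ne_zero.mpr (by omega)
      exact hp.not_isUnit (isUnit_of_dvd_unit h3 (Polynomial.isUnit_C.mpr
        (isUnit_iff_ne_zero.mpr hkne)))
    · have hdp0 : Polynomial.derivative p ≠ 0 := by
        intro h0
        have hdeg0 := Polynomial.natDegree_eq_zero_of_derivative_eq_zero h0
        have hpos := hp.natDegree_pos
        omega
      have hdeg := Polynomial.degree_derivative_lt hp.ne_zero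
      exact absurd (Polynomial.degree_le_of_dvd h3 hdp0) (not_le_of_gt hdeg)
  · exact hpv h2

theorem prime_factor_dvd_e {n : ℕ}
    {p u v d e : Polynomial K} {hc q : Fin n → Polynomial K}
    {M : Matrix (Fin n) (Fin n) (Polynomial K)}
    (hp : Irreducible p) {k : ℕ} (hk : 1 ≤ k) (hpv : ¬ p ∣ v) (hu : u = p ^ k * v)
    (hde : IsCoprime d e) (hdsqf : Squarefree d)
    (hqu : ∀ r : Polynomial K, r ∣ u → (∀ i, r ∣ q i) → IsUnit r)
    (key : ∀ j, u ^ 2 * hc j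
      = d * u * (e * Polynomial.derivative (q j) + ∑ i, q i * M i j)
        - d * Polynomial.derivative u * e * q j) :
    p ∣ e := by
  have hprime := hp.prime
  have hpu : p ∣ u := by
    rw [hu]
    exact dvd_mul_of_dvd_left (dvd_pow_self p (by omega)) v
  have hpk : p ^ k = p ^ (k - 1) * p := by
    rw [← pow_succ, Nat.sub_add_cancel hk]
  set wpoly : Polynomial K :=
    Polynomial.C (k : K) * Polynomial.derivative p * v + p * Polynomial.derivative v with hwp
  have hdu : Polynomial.derivative u = p ^ (k - 1) * wpoly := by
    rw [hu, Polynomial.derivative_mul, Polynomial.derivative_pow, hwp, hpk]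
    ring
  have hpw : ¬ p ∣ wpoly := not_dvd_aux hp hpv hk
  have hkey2 : ∀ j, d * Polynomial.derivative u * e * q j
      = d * u * (e * Polynomial.derivative (q j) + ∑ i, q i * M i j) - u ^ 2 * hc j := by
    intro j
    have := key j
    linear_combination this
  by_contra hpe
  by_cases hpd : p ∣ d
  · -- p divides d: contradiction via squarefreeness
    obtain ⟨d₁, hd₁⟩ := hpd
    have hpd₁ : ¬ p ∣ d₁ := by
      intro hdvd
      obtain ⟨d₂, hd₂⟩ := hdvd
      exact hp.not_isUnit (hdsqf p (by rw [hd₁, hd₂]; exact ⟨d₂, by ring⟩))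
    have hall : ∀ j, p ∣ q j := by
      intro j
      have hdvd1 : p ^ (k + 1) ∣ d * u * (e * Polynomial.derivative (q j) + ∑ i, q i * M i j) := by
        rw [hd₁, hu, pow_succ]
        exact ⟨d₁ * v * (e * Polynomial.derivative (q j) + ∑ i, q i * M i j), by ring⟩
      have hdvd2 : p ^ (k + 1) ∣ u ^ 2 * hc j := by
        rw [hu]
        have : p ^ (k + 1) ∣ p ^ (2 * k) := pow_dvd_pow p (by omega)
        exact this.trans ⟨v ^ 2 * hc j, by ring⟩
      have hdvd3 : p ^ (k + 1) ∣ d * Polynomial.derivative u * e * q j := by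
        rw [hkey2 j]
        exact dvd_sub hdvd1 hdvd2
      have heq : d * Polynomial.derivative u * e * q j
          = p ^ k * (d₁ * wpoly * e * q j) := by
        rw [hd₁, hdu, hpk]
        ring
      rw [heq, pow_succ] at hdvd3
      have hfin : p ∣ d₁ * wpoly * e * q j :=
        (mul_dvd_mul_iff_left (pow_ne_zero k hp.ne_zero)).mp hdvd3
      rcases hprime.dvd_mul.mp hfin with h4 | h4
      · rcases hprime.dvd_mul.mp h4 with h5 | h5
        · rcases hprime.dvd_mul.mp h5 with h6 | h6
          · exact absurd h6 hpd₁
          · exact absurd h6 hpw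
        · exact absurd h5 hpe
      · exact h4
    exact hp.not_isUnit (hqu p hpu hall)
  · -- p divides neither d nor e
    have hall : ∀ j, p ∣ q j := by
      intro j
      have hdvd1 : p ^ k ∣ d * u * (e * Polynomial.derivative (q j) + ∑ i, q i * M i j) := by
        rw [hu]
        exact ⟨d * v * (e * Polynomial.derivative (q j) + ∑ i, q i * M i j), by ring⟩
      have hdvd2 : p ^ k ∣ u ^ 2 * hc j := by
        rw [hu]
        have : p ^ k ∣ p ^ (2 * k) := pow_dvd_pow p (by omega)
        exact this.trans ⟨v ^ 2 * hc j, by ring⟩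
      have hdvd3 : p ^ k ∣ d * Polynomial.derivative u * e * q j := by
        rw [hkey2 j]
        exact dvd_sub hdvd1 hdvd2
      have heq : d * Polynomial.derivative u * e * q j
          = p ^ (k - 1) * (d * wpoly * e * q j) := by
        rw [hdu]
        ring
      rw [heq, hpk] at hdvd3
      have hfin : p ∣ d * wpoly * e * q j :=
        (mul_dvd_mul_iff_left (pow_ne_zero (k - 1) hp.ne_zero)).mp hdvd3
      rcases hprime.dvd_mul.mp hfin with h4 | h4
      · rcases hprime.dvd_mul.mp h4 with h5 | h5
        · rcases hprime.dvd_mul.mp h5 with h6 | h6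
          · exact absurd h6 hpd
          · exact absurd h6 hpw
        · exact absurd h5 hpe
      · exact h4
    exact hp.not_isUnit (hqu p hpu hall)

end Divisibility
set_option synthInstance.maxHeartbeats 1000000
set_option maxHeartbeats 2000000

section Helpers

variable {K : Type} [Field K] {m : Polynomial (RatFunc K)}

theorem hval_emb_comb_nonneg [Fact (Irreducible m)]
    (σ : ∀ a : AlgebraicClosure K, EmbFamily K (AlgebraicClosure K) m a)
    {W : Fin m.natDegree → AdjoinRoot m} (hWint : ∀ i, IntegralElem σ (W i))
    (α : Fin m.natDegree → Polynomial K) (a : AlgebraicClosure K) (ι : Fin m.natDegree) :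
    ((0:ℚ) : WithTop ℚ) ≤ hval ((σ a).emb ι (∑ i, toA m (α i) * W i)) := by
  rw [map_sum]
  apply le_hval_finsetSum
  intro j _
  rw [map_mul]
  have h1 := hval_emb_toA_nonneg (σ a) ι (α j)
  have h2 : ((0:ℚ) : WithTop ℚ) ≤ hval ((σ a).emb ι (W j)) := by
    exact_mod_cast hWint j a ι
  simpa using le_hval_mul_of_le h1 h2

theorem clear_denom [Fact (Irreducible m)]
    {W : Fin m.natDegree → AdjoinRoot m} {q : Fin m.natDegree → Polynomial K}
    {r : Polynomial K} (hr : r ≠ 0) :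
    toA m r * (∑ i, toA m (q i) / toA m r * W i) = ∑ i, toA m (q i) * W i := by
  rw [Finset.mul_sum]
  apply Finset.sum_congr rfl
  intro i _
  have hrr : toA m r ≠ 0 := toA_ne_zero hr
  have hx : toA m r * (toA m (q i) / toA m r) = toA m (q i) := by field_simp
  rw [← mul_assoc, hx]

end Helpers
/-- Let `W = (ω₁,…,ωₙ)` be an integral basis of `A` with `eW′ = MW`, and let
`h = Σ (h_i/(de)) ω_i` with `gcd(d, e) = 1`, `gcd(h₁,…,hₙ, d) = 1`, and `d` squarefree.
If `h = (Σ (q_i/u) ω_i)′` with `gcd(q₁,…,qₙ, u) = 1`, then `u` is a constant in `K`. -/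
theorem u_is_constant_for_integral_basis {K : Type} [Field K] [CharZero K]
    (m : Polynomial (RatFunc K)) [Fact (Irreducible m)]
    (D : AdjoinRoot m → AdjoinRoot m) (hD : IsDerivationOnA m D)
    (σ : ∀ a : AlgebraicClosure K, EmbFamily K (AlgebraicClosure K) m a)
    (hσ : ∀ a, IsDiffFamily D (σ a))
    (W : Fin m.natDegree → AdjoinRoot m)
    (e : Polynomial K) (M : Matrix (Fin m.natDegree) (Fin m.natDegree) (Polynomial K))
    -- `W` is an integral basis with `eW′ = MW`:
    (hW : IsIntegralBasis σ W) (hrel : DerivRel D W e M) (hgcd : GcdOne e M)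
    (h : AdjoinRoot m) (hc : Fin m.natDegree → Polynomial K) (d : Polynomial K)
    (hd0 : d ≠ 0) (he0 : e ≠ 0)
    -- `h = Σ (h_i/(de)) ω_i`:
    (hrep : toA m d * toA m e * h = ∑ i, toA m (hc i) * W i)
    (hde : IsCoprime d e)
    (hhd : ∀ p : Polynomial K, p ∣ d → (∀ i, p ∣ hc i) → IsUnit p)
    (hdsqf : Squarefree d)
    -- `h = (Σ (q_i/u) ω_i)′` with `gcd(q₁,…,qₙ, u) = 1`:
    (u : Polynomial K) (q : Fin m.natDegree → Polynomial K) (hu0 : u ≠ 0)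
    (hint : h = D (∑ i, toA m (q i) / toA m u * W i))
    (hqu : ∀ p : Polynomial K, p ∣ u → (∀ i, p ∣ q i) → IsUnit p) :
    ∃ c : K, u = Polynomial.C c := by
  by_cases hunit : IsUnit u
  · obtain ⟨c, _, hCc⟩ := Polynomial.isUnit_iff.mp hunit
    exact ⟨c, hCc.symm⟩
  exfalso
  obtain ⟨p, hp, hpu⟩ := WfDvdMonoid.exists_irreducible_factor hunit hu0
  obtain ⟨k, v, hpv, huf⟩ := WfDvdMonoid.max_power_factor hu0 hp
  have hk : 1 ≤ k := by
    by_contra hk0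
    push_neg at hk0
    have hk00 : k = 0 := by omega
    rw [hk00, pow_zero, one_mul] at huf
    exact hpv (huf ▸ hpu)
  have hWli : LinearIndependent (RatFunc K) W := hW.1.1
  have key := key_identity D hD W e M hWli hrel h hc d u q hu0 hrep hint
  have hpe : p ∣ e := prime_factor_dvd_e hp hk hpv huf hde hdsqf hqu key
  have hpd : ¬ p ∣ d := fun hdvd => hp.not_isUnit (hde.isUnit_of_dvd' hdvd hpe)
  obtain ⟨s, w, hpw, hef⟩ := WfDvdMonoid.max_power_factor he0 hp
  have hs1 : 1 ≤ s := by
    by_contra hs0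
    push_neg at hs0
    have hs00 : s = 0 := by omega
    rw [hs00, pow_zero, one_mul] at hef
    exact hpw (hef ▸ hpe)
  have hIa : ∀ a : AlgebraicClosure K, IsIntegral K a := fun a =>
    Algebra.IsIntegral.isIntegral a
  have htoAp : toA m p ≠ 0 := toA_ne_zero hp.ne_zero
  -- Step 1: s = 1 (otherwise all entries of `M` would be divisible by `p`)
  have hs2 : ¬ 2 ≤ s := by
    intro hs2
    set ψ : Fin m.natDegree → AdjoinRoot m :=
      fun i => (∑ j, toA m (M i j) * W j) / toA m p with hψ
    have hψrel : ∀ i, toA m p * ψ i = ∑ j, toA m (M i j) * W j := by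
      intro i
      rw [hψ]
      field_simp
    have hψint : ∀ i, IntegralElem σ (ψ i) := by
      intro i a ι
      by_cases hψ0 : (σ a).emb ι (ψ i) = 0
      · rw [hψ0, hval_zero']
        exact le_top
      obtain ⟨cψ, hcψ⟩ : ∃ cψ : ℚ, hval ((σ a).emb ι (ψ i)) = (cψ : WithTop ℚ) :=
        ⟨_, hval_of_ne hψ0⟩
      by_cases hroot : Polynomial.aeval a p = 0
      · -- at a root of p
        have hvp : hval ((σ a).emb ι (toA m p)) = ((1:ℚ) : WithTop ℚ) :=
          hval_emb_toA_irred (σ a) ι hp hroot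
        have hwa : Polynomial.aeval a w ≠ 0 := aeval_ne_of_not_dvd (hIa a) hp hroot hpw
        have hve : hval ((σ a).emb ι (toA m e)) = ((s:ℚ) : WithTop ℚ) := by
          rw [hef]
          exact hval_emb_toA_pow_mul (σ a) ι hp hroot hwa s
        have heq : hval ((σ a).emb ι (toA m p)) + hval ((σ a).emb ι (ψ i))
            = hval ((σ a).emb ι (toA m e)) + hval (hderiv ((σ a).emb ι (W i))) := by
          calc hval ((σ a).emb ι (toA m p)) + hval ((σ a).emb ι (ψ i))
              = hval ((σ a).emb ι (toA m p * ψ i)) := by rw [map_mul, hval_mul]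
            _ = hval ((σ a).emb ι (toA m e * D (W i))) := by rw [hψrel i, hrel i]
            _ = hval ((σ a).emb ι (toA m e) * hderiv ((σ a).emb ι (W i))) := by
                rw [map_mul, hσ a ι (W i)]
            _ = _ := hval_mul
        obtain ⟨r, hr, hpui⟩ := (σ a).emb_puiseux ι (W i)
        have hWnn : ∀ qq ∈ ((σ a).emb ι (W i)).support, 0 ≤ qq := by
          apply le_hval_iff.mp
          exact_mod_cast hW.2.1 i a ι
        have hder_lb : ((1 / r - 1 : ℚ) : WithTop ℚ) ≤ hval (hderiv ((σ a).emb ι (W i))) :=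
          le_hval_hderiv_of_puiseux hr hpui hWnn
        by_cases hd0' : hderiv ((σ a).emb ι (W i)) = 0
        · rw [hvp, hcψ, hd0', hval_zero'] at heq
          rw [← WithTop.coe_add] at heq
          exact absurd (heq.trans (by simp)) WithTop.coe_ne_top
        obtain ⟨y, hy⟩ : ∃ y : ℚ, hval (hderiv ((σ a).emb ι (W i))) = (y : WithTop ℚ) :=
          ⟨_, hval_of_ne hd0'⟩
        rw [hvp, hcψ, hve, hy, ← WithTop.coe_add, ← WithTop.coe_add] at heq
        have heqQ : 1 + cψ = (s : ℚ) + y := WithTop.coe_inj.mp heq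
        have hyQ : 1 / (r:ℚ) - 1 ≤ y := by
          rw [hy] at hder_lb
          exact_mod_cast hder_lb
        have hrQ : (0:ℚ) < 1 / (r:ℚ) := by
          apply div_pos one_pos
          exact_mod_cast hr
        have hsQ : (2:ℚ) ≤ (s:ℚ) := by exact_mod_cast hs2
        have : (0:ℚ) ≤ cψ := by linarith
        rw [hcψ]
        exact_mod_cast this
      · -- not a root of p
        have hvp : hval ((σ a).emb ι (toA m p)) = ((0:ℚ) : WithTop ℚ) :=
          hval_emb_toA_of_aeval_ne (σ a) ι hroot
        have hsum := hval_emb_comb_nonneg σ hW.2.1 (fun j => M i j) a ι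
        have heq : hval ((σ a).emb ι (toA m p)) + hval ((σ a).emb ι (ψ i))
            = hval ((σ a).emb ι (∑ j, toA m (M i j) * W j)) := by
          rw [← hval_mul, ← map_mul, hψrel i]
        rw [hvp, hcψ, ← WithTop.coe_add, zero_add] at heq
        rw [hcψ]
        rw [← heq] at hsum
        exact_mod_cast hsum
    have hMdvd : ∀ i j, p ∣ M i j := by
      intro i j
      obtain ⟨ci, hci⟩ := hW.2.2 (ψ i) (hψint i)
      have hsums : ∑ j, toA m (M i j) * W j = ∑ j, toA m (p * ci j) * W j := by
        rw [← hψrel i, hci, Finset.mul_sum]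
        apply Finset.sum_congr rfl
        intro j _
        rw [toA_mul, mul_assoc]
      exact ⟨ci j, coeff_ext_poly hWli hsums j⟩
    exact hp.not_isUnit (hgcd p hpe hMdvd)
  have hseq : s = 1 := by omega
  -- Step 2: the element g₂ = Σ (q_i/p) ω_i is not integral
  set g₂ : AdjoinRoot m := ∑ i, toA m (q i) / toA m p * W i with hg₂
  have hpg₂ : toA m p * g₂ = ∑ i, toA m (q i) * W i := clear_denom hp.ne_zero
  have hg₂ni : ¬ IntegralElem σ g₂ := by
    intro hint2
    obtain ⟨c2, hc2⟩ := hW.2.2 g₂ hint2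
    have hsums : ∑ i, toA m (q i) * W i = ∑ i, toA m (p * c2 i) * W i := by
      rw [← hpg₂, hc2, Finset.mul_sum]
      apply Finset.sum_congr rfl
      intro i _
      rw [toA_mul, mul_assoc]
    exact hp.not_isUnit (hqu p hpu (fun i => ⟨c2 i, coeff_ext_poly hWli hsums i⟩))
  simp only [IntegralElem, LocIntegralAt] at hg₂ni
  push_neg at hg₂ni
  obtain ⟨a, ι, hlt⟩ := hg₂ni
  have hlt' : hval ((σ a).emb ι g₂) < 0 := hlt
  have hg₂emb0 : (σ a).emb ι g₂ ≠ 0 := by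
    intro h0
    rw [h0, hval_zero'] at hlt'
    exact absurd hlt' (by simp)
  obtain ⟨w₂, hw₂⟩ : ∃ w₂ : ℚ, hval ((σ a).emb ι g₂) = (w₂ : WithTop ℚ) :=
    ⟨_, hval_of_ne hg₂emb0⟩
  have hw₂neg : w₂ < 0 := by
    rw [hw₂] at hlt'
    exact_mod_cast hlt'
  have hGnn := hval_emb_comb_nonneg σ hW.2.1 q a ι
  -- the point a is a root of p
  have hroot : Polynomial.aeval a p = 0 := by
    by_contra hnr
    have hvp : hval ((σ a).emb ι (toA m p)) = ((0:ℚ) : WithTop ℚ) :=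
      hval_emb_toA_of_aeval_ne (σ a) ι hnr
    have heq : hval ((σ a).emb ι (toA m p)) + hval ((σ a).emb ι g₂)
        = hval ((σ a).emb ι (∑ i, toA m (q i) * W i)) := by
      rw [← hval_mul, ← map_mul, hpg₂]
    rw [hvp, hw₂, ← WithTop.coe_add, zero_add] at heq
    rw [← heq] at hGnn
    have : (0:ℚ) ≤ w₂ := by exact_mod_cast hGnn
    linarith
  -- local valuations at a
  have hda : Polynomial.aeval a d ≠ 0 := aeval_ne_of_not_dvd (hIa a) hp hroot hpd
  have hva_d : hval ((σ a).emb ι (toA m d)) = ((0:ℚ) : WithTop ℚ) :=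
    hval_emb_toA_of_aeval_ne (σ a) ι hda
  have hva_e : hval ((σ a).emb ι (toA m e)) = ((1:ℚ) : WithTop ℚ) := by
    rw [hef, hseq]
    have := hval_emb_toA_pow_mul (σ a) ι hp hroot
      (aeval_ne_of_not_dvd (hIa a) hp hroot hpw) 1
    rw [this]
    norm_num
  set g : AdjoinRoot m := ∑ i, toA m (q i) / toA m u * W i with hgdef
  have hug : toA m u * g = ∑ i, toA m (q i) * W i := clear_denom hu0
  have hfac : toA m (p ^ (k-1) * v) * g = g₂ := by
    apply mul_left_cancel₀ htoAp
    rw [hpg₂, ← hug, ← mul_assoc, ← toA_mul]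
    have hppk : p * (p ^ (k-1) * v) = u := by
      rw [huf, ← mul_assoc, ← pow_succ']
      congr 2
      omega
    rw [hppk]
  have hva_fac : hval ((σ a).emb ι (toA m (p ^ (k-1) * v))) = (((k-1 : ℕ):ℚ) : WithTop ℚ) :=
    hval_emb_toA_pow_mul (σ a) ι hp hroot (aeval_ne_of_not_dvd (hIa a) hp hroot hpv) (k-1)
  have hgemb0 : (σ a).emb ι g ≠ 0 := by
    intro h0
    apply hg₂emb0
    rw [← hfac, map_mul, h0, mul_zero]
  obtain ⟨wg, hwg⟩ : ∃ wg : ℚ, hval ((σ a).emb ι g) = (wg : WithTop ℚ) :=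
    ⟨_, hval_of_ne hgemb0⟩
  have hrelval : ((k-1:ℕ) : ℚ) + wg = w₂ := by
    have heq : hval ((σ a).emb ι (toA m (p ^ (k-1) * v))) + hval ((σ a).emb ι g)
        = hval ((σ a).emb ι g₂) := by
      rw [← hval_mul, ← map_mul, hfac]
    rw [hva_fac, hwg, hw₂, ← WithTop.coe_add] at heq
    exact_mod_cast heq
  have hwgneg : wg < 0 := by
    have hk1nn : (0:ℚ) ≤ ((k-1:ℕ) : ℚ) := Nat.cast_nonneg _
    linarith
  have hembh : (σ a).emb ι h = hderiv ((σ a).emb ι g) := by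
    rw [hint]
    exact hσ a ι g
  have hvh : hval ((σ a).emb ι h) = ((wg - 1 : ℚ) : WithTop ℚ) := by
    rw [hembh]
    exact hval_hderiv_eq hwg (ne_of_lt hwgneg)
  have hfinal : hval ((σ a).emb ι (toA m d)) + hval ((σ a).emb ι (toA m e))
      + hval ((σ a).emb ι h) = hval ((σ a).emb ι (∑ i, toA m (hc i) * W i)) := by
    rw [← hval_mul, ← hval_mul, ← map_mul, ← map_mul, hrep]
  rw [hva_d, hva_e, hvh, ← WithTop.coe_add, ← WithTop.coe_add] at hfinal
  have hrhs := hval_emb_comb_nonneg σ hW.2.1 hc a ι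
  rw [← hfinal] at hrhs
  have : (0:ℚ) ≤ 0 + 1 + (wg - 1) := by exact_mod_cast hrhs
  linarith
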